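/- Let N ≥ 1, ζ = exp(2πi/N), and fix k, n, m ∈ ZMod N. For x : ZMod N → ℂ, let x' be the vector (x')_j = ζ^m · ζ^{nj} · x_{j+k} (the action of the Heisenberg group element (k, n, m)). Then for all i, j ∈ ZMod N, B^M(x')(i,j) = B^M(x)(i,j) and B^{FM}(x')(i,j) = B^{FM}(x)(i,j). That is, the Heisenberg bispectrum B^H = (B^M, B^{FM}) is invariant under the Heisenberg group action. -/

import Mathlib

open ZMod

/-- `ζ = exp(2πi/N)`, the standard primitive `N`-th root of unity. -/
noncomputable def heisZeta (N : ℕ) : ℂ :=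
  Complex.exp (2 * (Real.pi : ℂ) * Complex.I / (N : ℂ))

/-- The modulus bispectrum `B^M(x)(i,j) = ŷ[i]·ŷ[j]·ŷ[-i-j]` where `y_t = |x_t|²`. -/
noncomputable def modulusBispectrum {N : ℕ} [NeZero N] (x : ZMod N → ℂ) (i j : ZMod N) : ℂ :=
  dft (fun t => ((‖x t‖ : ℂ)) ^ 2) i *
    dft (fun t => ((‖x t‖ : ℂ)) ^ 2) j *
    dft (fun t => ((‖x t‖ : ℂ)) ^ 2) (-i - j)

/-- The Fourier-modulus bispectrum `B^{FM}(x)(i,j) = ẑ[i]·ẑ[j]·ẑ[-i-j]` where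
`z_t = |x̂[t]|²`. -/
noncomputable def fourierModulusBispectrum {N : ℕ} [NeZero N] (x : ZMod N → ℂ)
    (i j : ZMod N) : ℂ :=
  dft (fun t => ((‖dft x t‖ : ℂ)) ^ 2) i *
    dft (fun t => ((‖dft x t‖ : ℂ)) ^ 2) j *
    dft (fun t => ((‖dft x t‖ : ℂ)) ^ 2) (-i - j)

open ZMod

section helpers
variable {N : ℕ} [NeZero N]

lemma heisZeta_pow (a : ZMod N) :
    Complex.exp (2 * (Real.pi : ℂ) * Complex.I / (N : ℂ)) ^ a.val = stdAddChar a := by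
  rw [stdAddChar_apply, toCircle_apply, ← Complex.exp_nat_mul]
  ring_nf

lemma abs_stdAddChar (a : ZMod N) : ‖(stdAddChar a : ℂ)‖ = 1 := by
  rw [stdAddChar_apply]; exact Circle.norm_coe _

lemma dft_shift (Φ : ZMod N → ℂ) (k s : ZMod N) :
    dft (fun t => Φ (t + k)) s = stdAddChar (k * s) * dft Φ s := by
  rw [dft_apply, dft_apply, Finset.mul_sum]
  refine Fintype.sum_equiv (Equiv.addRight k) _ _ fun t => ?_
  simp only [Equiv.coe_addRight, smul_eq_mul, ← mul_assoc, ← AddChar.map_add_eq_mul]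
  ring_nf

lemma dft_modulate (Φ : ZMod N → ℂ) (n s : ZMod N) :
    dft (fun t => stdAddChar (n * t) * Φ t) s = dft Φ (s - n) := by
  rw [dft_apply, dft_apply]
  refine Finset.sum_congr rfl fun t _ => ?_
  simp only [smul_eq_mul, ← mul_assoc, ← AddChar.map_add_eq_mul]
  ring_nf

lemma tri_shift (Φ : ZMod N → ℂ) (k i j : ZMod N) :
    dft (fun t => Φ (t + k)) i * dft (fun t => Φ (t + k)) j *
      dft (fun t => Φ (t + k)) (-i - j)
      = dft Φ i * dft Φ j * dft Φ (-i - j) := by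
  rw [dft_shift, dft_shift, dft_shift]
  have : stdAddChar (k * i) * stdAddChar (k * j) * stdAddChar (k * (-i - j)) = 1 := by
    rw [← AddChar.map_add_eq_mul, ← AddChar.map_add_eq_mul]
    have : k * i + k * j + k * (-i - j) = 0 := by ring
    rw [this, AddChar.map_zero_eq_one]
  calc stdAddChar (k * i) * dft Φ i * (stdAddChar (k * j) * dft Φ j) *
        (stdAddChar (k * (-i - j)) * dft Φ (-i - j))
      = (stdAddChar (k * i) * stdAddChar (k * j) * stdAddChar (k * (-i - j))) *
        (dft Φ i * dft Φ j * dft Φ (-i - j)) := by ring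
    _ = _ := by rw [this, one_mul]

end helpers

theorem heisenberg_bispectrum_invariant
    {N : ℕ} [NeZero N] (k n m : ZMod N) (x : ZMod N → ℂ) (i j : ZMod N) :
    modulusBispectrum (fun t => heisZeta N ^ m.val * heisZeta N ^ (n * t).val * x (t + k)) i j
        = modulusBispectrum x i j ∧
      fourierModulusBispectrum
          (fun t => heisZeta N ^ m.val * heisZeta N ^ (n * t).val * x (t + k)) i j
        = fourierModulusBispectrum x i j := by
  set x' : ZMod N → ℂ := fun t => heisZeta N ^ m.val * heisZeta N ^ (n * t).val * x (t + k)
    with hx'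
  have habs : ∀ t, ‖x' t‖ = ‖x (t + k)‖ := by
    intro t
    simp only [hx', heisZeta, heisZeta_pow, norm_mul, abs_stdAddChar, one_mul]
  constructor
  · unfold modulusBispectrum
    have h : (fun t => ((‖x' t‖ : ℂ)) ^ 2)
        = fun t => ((‖x (t + k)‖ : ℂ)) ^ 2 := by
      funext t; rw [habs]
    rw [h]
    exact tri_shift (fun t => ((‖x t‖ : ℂ)) ^ 2) k i j
  · unfold fourierModulusBispectrum
    have hdft : ∀ s, dft x' s
        = stdAddChar m * (stdAddChar (k * (s - n)) * dft x (s - n)) := by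
      intro s
      have h1 : x' = fun t => stdAddChar m * (stdAddChar (n * t) * x (t + k)) := by
        funext t
        simp only [hx', heisZeta, heisZeta_pow]
        · rw [mul_assoc]
      rw [h1, congrFun (dft_const_mul (stdAddChar m) fun t => stdAddChar (n * t) * x (t + k)) s,
        dft_modulate (fun t => x (t + k)) n s, dft_shift]
    have habsdft : ∀ s, ‖dft x' s‖ = ‖dft x (s + -n)‖ := by
      intro s
      rw [hdft s, norm_mul, norm_mul, abs_stdAddChar, abs_stdAddChar, one_mul, one_mul,
        sub_eq_add_neg]
    have h : (fun t => ((‖dft x' t‖ : ℂ)) ^ 2)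
        = fun t => ((‖dft x (t + -n)‖ : ℂ)) ^ 2 := by
      funext t; rw [habsdft]
    rw [h]
    exact tri_shift (fun t => ((‖dft x t‖ : ℂ)) ^ 2) (-n) i j
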